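/- arXiv:1011.2169 — 2 statements merged into one kernel-verified Lean document; each statement's English description precedes it below -/
import Mathlib

section
/- For 1 ≤ m ≤ ⌊(n−1)/2⌋, the polynomial s_m := ∑_{k=0}^{m} (−1)^k · ((2m+1−2k)/2) · x_k x_{2m+1−k} satisfies D_n(s_m) = f_m, where f_m = ∑_{k=0}^{m−1} (−1)^k x_k x_{2m−k} + (1/2)(−1)^m x_m^2. -/
open MvPolynomial Finset
open Fin.NatCast

noncomputable def Dw (K : Type) [CommRing K] (n : ℕ) :
    Derivation K (MvPolynomial (Fin (n + 1)) K) (MvPolynomial (Fin (n + 1)) K) :=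
  MvPolynomial.mkDerivation K fun i =>
    if i.1 = 0 then 0 else
      MvPolynomial.X ⟨i.1 - 1, Nat.lt_of_le_of_lt (Nat.sub_le _ _) i.isLt⟩

noncomputable def fpoly (K : Type) [Field K] (n m : ℕ) : MvPolynomial (Fin (n + 1)) K :=
  ∑ k ∈ Finset.range m,
      ((-1 : K) ^ k) • (X ((k : ℕ) : Fin (n + 1)) * X ((2 * m - k : ℕ) : Fin (n + 1)))
    + (((-1 : K) ^ m) / 2) • (X ((m : ℕ) : Fin (n + 1))) ^ 2

noncomputable def spoly (K : Type) [Field K] (n m : ℕ) : MvPolynomial (Fin (n + 1)) K :=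
  ∑ k ∈ Finset.range (m + 1),
    (((-1 : K) ^ k) * ((2 * m + 1 - 2 * k : ℕ) : K) / 2) •
      (X ((k : ℕ) : Fin (n + 1)) * X ((2 * m + 1 - k : ℕ) : Fin (n + 1)))

lemma Dw_e0 (K : Type) [CommRing K] (n : ℕ) :
    Dw K n (X (((0:ℕ)) : Fin (n+1)) : MvPolynomial (Fin (n+1)) K) = 0 := by
  rw [Dw, mkDerivation_X]
  simp

lemma Dw_e (K : Type) [CommRing K] (n j : ℕ) (hj : j + 1 ≤ n) :
    Dw K n (X (((j+1 : ℕ)) : Fin (n+1)) : MvPolynomial (Fin (n+1)) K)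
      = X ((j : ℕ) : Fin (n+1)) := by
  rw [Dw, mkDerivation_X]
  have h1 : (((j+1 : ℕ)) : Fin (n+1)).1 = j + 1 := Fin.val_cast_of_lt (by omega)
  rw [if_neg (by omega)]
  congr 1
  ext
  show (((j+1:ℕ)) : Fin (n+1)).val - 1 = ((j : ℕ) : Fin (n+1)).val
  rw [h1, Fin.val_cast_of_lt (show j < n+1 by omega)]
  omega

theorem stmt2 (K : Type) [Field K] [CharZero K] (n m : ℕ)
    (h1 : 1 ≤ m) (h2 : m ≤ (n - 1) / 2) :
    Dw K n (spoly K n m) = fpoly K n m := by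
  have hn : 2 * m + 1 ≤ n := by omega
  rw [spoly, map_sum]
  rw [Finset.sum_congr rfl (g := fun k =>
      (((-1:K)^k) * ((2*m+1-2*k : ℕ) : K) / 2) •
        ((if k = 0 then 0 else X (((k-1:ℕ)) : Fin (n+1))) * X ((2*m+1-k : ℕ) : Fin (n+1))
          + X ((k:ℕ) : Fin (n+1)) * X ((2*m-k : ℕ) : Fin (n+1))))
      (fun k hk => ?_)]
  · -- sum manipulation
    simp only [smul_add]
    rw [Finset.sum_add_distrib, Finset.sum_range_succ' _ m, Finset.sum_range_succ _ m]
    have e0 : (((-1:K)^0) * ((2*m+1-2*0 : ℕ) : K) / 2) •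
        ((if (0:ℕ) = 0 then 0 else X (((0-1:ℕ)) : Fin (n+1))) * X ((2*m+1-0 : ℕ) : Fin (n+1)))
        = (0 : MvPolynomial (Fin (n+1)) K) := by simp
    rw [e0, add_zero]
    have em : (((-1:K)^m) * ((2*m+1-2*m : ℕ) : K) / 2) •
        (X ((m:ℕ) : Fin (n+1)) * X ((2*m-m : ℕ) : Fin (n+1)))
        = (((-1 : K) ^ m) / 2) • (X ((m : ℕ) : Fin (n+1)) : MvPolynomial (Fin (n+1)) K) ^ 2 := by
      have h3 : 2*m+1-2*m = 1 := by omega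
      have h4 : 2*m-m = m := by omega
      rw [h3, h4, sq]
      norm_num
    rw [em]
    rw [fpoly, ← add_assoc, ← Finset.sum_add_distrib]
    congr 1
    refine Finset.sum_congr rfl (fun k hk => ?_)
    have hk' : k < m := Finset.mem_range.mp hk
    have h5 : (k+1) - 1 = k := by omega
    have h6 : 2*m+1-(k+1) = 2*m-k := by omega
    rw [if_neg (Nat.succ_ne_zero k), h5, h6, ← add_smul]
    congr 1
    have c1 : ((2*m+1-2*(k+1) : ℕ) : K) = 2*m - 2*k - 1 := by
      rw [Nat.cast_sub (by omega)]; push_cast; ring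
    have c2 : ((2*m+1-2*k : ℕ) : K) = 2*m - 2*k + 1 := by
      rw [Nat.cast_sub (by omega)]; push_cast; ring
    rw [c1, c2]
    ring
  · -- per-term Leibniz
    have hk' : k ≤ m := by simpa [Nat.lt_succ_iff] using Finset.mem_range.mp hk
    rw [Derivation.map_smul, Derivation.leibniz, smul_eq_mul, smul_eq_mul]
    have hJ : (2*m+1-k : ℕ) = (2*m-k) + 1 := by omega
    have hD2 : Dw K n (X ((2*m+1-k : ℕ) : Fin (n+1)) : MvPolynomial (Fin (n+1)) K)
        = X ((2*m-k : ℕ) : Fin (n+1)) := by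
      rw [hJ, Dw_e K n (2*m-k) (by omega)]
    rw [hD2]
    rcases k with _ | j
    · rw [Dw_e0]
      simp [mul_comm]
    · simp only [Nat.add_sub_cancel, Nat.succ_ne_zero, if_false]
      rw [Dw_e K n j (by omega)]
      congr 1
      ring
end

section
/- The radical of the ideal of R_n generated by f_0, f_1, ..., f_{⌊n/2⌋} equals the ideal (x_0, x_1, ..., x_{⌊n/2⌋}) of R_n. -/
open MvPolynomial Finset
open Fin.NatCast

section Aux

variable (K : Type) [Field K] [CharZero K] (n : ℕ)

/-- the target ideal -/
noncomputable def Jdl : Ideal (MvPolynomial (Fin (n + 1)) K) :=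
  Ideal.span ((fun i : ℕ => (X ((i : ℕ) : Fin (n + 1)) :
          MvPolynomial (Fin (n + 1)) K)) '' {i : ℕ | i ≤ n / 2})

noncomputable def phiJ : MvPolynomial (Fin (n + 1)) K →ₐ[K] MvPolynomial (Fin (n + 1)) K :=
  aeval (fun i : Fin (n + 1) => if i.1 ≤ n / 2 then 0 else X i)

lemma X_mem_Jdl {i : Fin (n + 1)} (h : i.1 ≤ n / 2) : X i ∈ Jdl K n := by
  apply Ideal.subset_span
  exact ⟨i.1, h, by simp [Fin.cast_val_eq_self]⟩

lemma sub_phiJ_mem (p : MvPolynomial (Fin (n + 1)) K) : p - phiJ K n p ∈ Jdl K n := by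
  induction p using MvPolynomial.induction_on with
  | C a => simp [phiJ]
  | add p q hp hq =>
      have : p + q - phiJ K n (p + q) = (p - phiJ K n p) + (q - phiJ K n q) := by
        rw [map_add]; ring
      rw [this]; exact add_mem hp hq
  | mul_X p i hp =>
      have : p * X i - phiJ K n (p * X i)
          = (p - phiJ K n p) * X i + phiJ K n p * (X i - phiJ K n (X i)) := by
        rw [map_mul]; ring
      rw [this]
      refine add_mem (Ideal.mul_mem_right _ _ hp) ?_
      by_cases h : i.1 ≤ n / 2
      · have : phiJ K n (X i) = 0 := by simp [phiJ, h]
        rw [this, sub_zero]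
        exact Ideal.mul_mem_left _ _ (X_mem_Jdl K n h)
      · have : phiJ K n (X i) = X i := by simp [phiJ, h]
        simp [this]

lemma ker_phiJ : RingHom.ker (phiJ K n).toRingHom = Jdl K n := by
  apply le_antisymm
  · intro p hp
    rw [RingHom.mem_ker] at hp
    have h2 := sub_phiJ_mem K n p
    rwa [show (phiJ K n) p = 0 from hp, sub_zero] at h2
  · rw [Jdl, Ideal.span_le]
    rintro _ ⟨i, hi, rfl⟩
    simp only [Set.mem_setOf_eq] at hi
    have hi' : i ≤ n := le_trans hi (Nat.div_le_self n 2)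
    have hv : ((i : Fin (n + 1)) : ℕ) = i := Fin.val_cast_of_lt (by omega)
    simp only [SetLike.mem_coe, RingHom.mem_ker, AlgHom.toRingHom_eq_coe,
      RingHom.coe_coe, phiJ, aeval_X, hv]
    rw [if_pos hi]

lemma Jdl_isPrime : (Jdl K n).IsPrime := by
  rw [← ker_phiJ]
  exact RingHom.ker_isPrime _

end Aux

theorem stmt4 (K : Type) [Field K] [CharZero K] (n : ℕ) :
    (Ideal.span ({X ((0 : ℕ) : Fin (n + 1))} ∪
        (fpoly K n '' {m : ℕ | 1 ≤ m ∧ m ≤ n / 2}))).radical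
      = Ideal.span ((fun i : ℕ => (X ((i : ℕ) : Fin (n + 1)) :
          MvPolynomial (Fin (n + 1)) K)) '' {i : ℕ | i ≤ n / 2}) := by
  set I : Ideal (MvPolynomial (Fin (n + 1)) K) :=
    Ideal.span ({X ((0 : ℕ) : Fin (n + 1))} ∪
        (fpoly K n '' {m : ℕ | 1 ≤ m ∧ m ≤ n / 2})) with hI
  show I.radical = Jdl K n
  apply le_antisymm
  · rw [(Jdl_isPrime K n).isRadical.radical_le_iff, hI, Ideal.span_le]
    rintro p (hp | ⟨m, ⟨hm1, hm2⟩, rfl⟩)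
    · rw [Set.mem_singleton_iff] at hp
      subst hp
      exact X_mem_Jdl K n (by simp)
    · rw [fpoly]
      refine add_mem (Ideal.sum_mem _ fun k hk => ?_) ?_
      · rw [Finset.mem_range] at hk
        rw [smul_eq_C_mul]
        refine Ideal.mul_mem_left _ _ (Ideal.mul_mem_right _ _ ?_)
        refine X_mem_Jdl K n ?_
        rw [Fin.val_cast_of_lt (by omega : k < n + 1)]
        omega
      · rw [sq]
        rw [smul_eq_C_mul]
        refine Ideal.mul_mem_left _ _ (Ideal.mul_mem_right _ _ ?_)
        refine X_mem_Jdl K n ?_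
        rw [Fin.val_cast_of_lt (by omega : m < n + 1)]
        omega
  · rw [Jdl, Ideal.span_le]
    rintro _ ⟨i, hi, rfl⟩
    simp only [Set.mem_setOf_eq] at hi
    clear hI
    induction i using Nat.strong_induction_on with
    | _ i IH =>
      rcases Nat.eq_zero_or_pos i with rfl | hpos
      · exact Ideal.le_radical (Ideal.subset_span (Or.inl rfl))
      · have hf : fpoly K n i ∈ I.radical :=
          Ideal.le_radical (Ideal.subset_span (Or.inr ⟨i, ⟨hpos, hi⟩, rfl⟩))
        have hsum : (∑ k ∈ Finset.range i,
            ((-1 : K) ^ k) • (X ((k : ℕ) : Fin (n + 1)) * X ((2 * i - k : ℕ) : Fin (n + 1))))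
            ∈ I.radical := by
          refine Ideal.sum_mem _ fun k hk => ?_
          rw [Finset.mem_range] at hk
          rw [smul_eq_C_mul]
          exact Ideal.mul_mem_left _ _ (Ideal.mul_mem_right _ _ (IH k hk (by omega)))
        have hsq : (((-1 : K) ^ i) / 2) • (X ((i : ℕ) : Fin (n + 1)) :
            MvPolynomial (Fin (n + 1)) K) ^ 2 ∈ I.radical := by
          have : (((-1 : K) ^ i) / 2) • (X ((i : ℕ) : Fin (n + 1)) :
              MvPolynomial (Fin (n + 1)) K) ^ 2 = fpoly K n i - (∑ k ∈ Finset.range i,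
            ((-1 : K) ^ k) • (X ((k : ℕ) : Fin (n + 1)) * X ((2 * i - k : ℕ) : Fin (n + 1)))) := by
            rw [fpoly]; ring
          rw [this]
          exact sub_mem hf hsum
        have hsq' : (X ((i : ℕ) : Fin (n + 1)) : MvPolynomial (Fin (n + 1)) K) ^ 2
            ∈ I.radical := by
          have h2 : ((2 * (-1 : K) ^ i)) • ((((-1 : K) ^ i) / 2) •
              (X ((i : ℕ) : Fin (n + 1)) : MvPolynomial (Fin (n + 1)) K) ^ 2)
              = (X ((i : ℕ) : Fin (n + 1)) : MvPolynomial (Fin (n + 1)) K) ^ 2 := by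
            rw [smul_smul]
            have : (2 * (-1 : K) ^ i) * (((-1 : K) ^ i) / 2) = 1 := by
              have : ((-1 : K) ^ i) * ((-1 : K) ^ i) = 1 := by
                rw [← pow_add, ← two_mul, pow_mul]; norm_num
              field_simp
              linear_combination this
            rw [this, one_smul]
          rw [← h2, smul_eq_C_mul]
          exact Ideal.mul_mem_left _ _ hsq
        have : (X ((i : ℕ) : Fin (n + 1)) : MvPolynomial (Fin (n + 1)) K) ∈ I.radical.radical :=
          Ideal.mem_radical_of_pow_mem (show _ ^ 2 ∈ I.radical.radical from Ideal.le_radical hsq')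
        rwa [Ideal.radical_idem] at this
end
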